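/- Let G be a group, H a finitely generated subgroup of G, and x ∈ G. Then InvLO_x^H(G) ∩ Cof_x^H(G) is an open subset of InvLO_x^H(G) (in the subspace topology inherited from LO(G)). -/

import Mathlib

/-- A subset `P ⊆ G` is the positive cone of a left ordering: `P·P ⊆ P` and
`G = P ⊔ P⁻¹ ⊔ {1}`. -/
def IsPosCone {G : Type*} [Group G] (P : Set G) : Prop :=
  (∀ a ∈ P, ∀ b ∈ P, a * b ∈ P) ∧
  (∀ g : G, g ∈ P ∨ g⁻¹ ∈ P ∨ g = 1) ∧
  (∀ g : G, g ∈ P → g⁻¹ ∉ P) ∧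
  (1 : G) ∉ P

/-- The left-invariant order determined by a positive cone: `a <_P b` iff `a⁻¹ b ∈ P`. -/
def ltC {G : Type*} [Group G] (P : Set G) (a b : G) : Prop := a⁻¹ * b ∈ P

/-- The space of left orderings of `G`, as a subspace of `G → Bool` (product of
discrete two-point spaces). -/
def LO (G : Type*) [Group G] : Type _ :=
  { P : G → Bool // IsPosCone { g : G | P g = true } }

instance (G : Type*) [Group G] : TopologicalSpace (LO G) :=
  inferInstanceAs (TopologicalSpace { P : G → Bool // IsPosCone { g : G | P g = true } })

/-- The positive cone of a point of `LO G`. -/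
def cone {G : Type*} [Group G] (P : LO G) : Set G := { g : G | P.1 g = true }

/-- `InvLO_x^H(G)`: left orderings `P` such that the right multiplication by `x`
preserves `<_P` on the subgroup generated by `H ∪ {x}`. -/
def InvLO {G : Type*} [Group G] (H : Subgroup G) (x : G) : Set (LO G) :=
  { P | ∀ b ∈ Subgroup.closure ((H : Set G) ∪ {x}),
        ∀ b' ∈ Subgroup.closure ((H : Set G) ∪ {x}),
        ltC (cone P) b b' → ltC (cone P) (b * x) (b' * x) }

/-- `Cof_x^H(G)`: left orderings of `G` for which `x` is cofinal to `H`. -/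
def Cof {G : Type*} [Group G] (H : Subgroup G) (x : G) : Set (LO G) :=
  { P | ∀ h ∈ H, ∃ N : ℕ, 1 ≤ N ∧
        ltC (cone P) (x ^ (-(N : ℤ))) h ∧ ltC (cone P) h (x ^ (N : ℤ)) }

section Aux


variable {G : Type*} [Group G] (P : LO G)

lemma cone_mul {a b : G} (ha : a ∈ cone P) (hb : b ∈ cone P) : a * b ∈ cone P :=
  P.2.1 a ha b hb

lemma one_not_cone : (1 : G) ∉ cone P := P.2.2.2.2

lemma cone_not_inv {a : G} (ha : a ∈ cone P) : a⁻¹ ∉ cone P := P.2.2.2.1 a ha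

lemma ltC_trans {a b c : G} (h1 : ltC (cone P) a b) (h2 : ltC (cone P) b c) :
    ltC (cone P) a c := by
  have := cone_mul P h1 h2
  simpa [ltC, mul_assoc] using this

lemma ltC_left_iff (c : G) {a b : G} : ltC (cone P) (c * a) (c * b) ↔ ltC (cone P) a b := by
  unfold ltC
  rw [show (c * a)⁻¹ * (c * b) = a⁻¹ * b by group]

lemma not_ltC_self (a : G) : ¬ ltC (cone P) a a := by
  simpa [ltC] using one_not_cone P

lemma ltC_asymm {a b : G} (h : ltC (cone P) a b) : ¬ ltC (cone P) b a := by
  intro h'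
  exact cone_not_inv P h (by simpa [ltC, mul_inv_rev] using h')

lemma ltC_total {a b : G} (hab : a ≠ b) : ltC (cone P) a b ∨ ltC (cone P) b a := by
  rcases P.2.2.1 (a⁻¹ * b) with h | h | h
  · exact Or.inl h
  · right; simpa [ltC, mul_inv_rev, cone] using h
  · exact absurd (by rw [← mul_left_cancel_iff (a := a⁻¹), h, inv_mul_cancel]) hab

lemma cone_pow {a : G} (ha : a ∈ cone P) : ∀ N : ℕ, a ^ (N + 1) ∈ cone P := by
  intro N
  induction N with
  | zero => simpa using ha
  | succ n ih => rw [pow_succ]; exact cone_mul P ih ha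

/-- if some positive power of `x` is positive, so is `x`. -/
lemma x_mem_of_pow {x : G} {N : ℕ} (hN : 1 ≤ N) (h : x ^ N ∈ cone P) : x ∈ cone P := by
  rcases P.2.2.1 x with hx | hx | hx
  · exact hx
  · exfalso
    obtain ⟨M, rfl⟩ := Nat.exists_eq_add_of_le hN
    have := cone_pow P hx M
    rw [show M + 1 = 1 + M from Nat.add_comm _ _] at this
    exact cone_not_inv P h (by simpa [inv_pow] using this)
  · subst hx; simpa using h

end Aux

section Inv

variable {G : Type*} [Group G] {H : Subgroup G} {x : G} {P : LO G}


variable {G : Type*} [Group G] {H : Subgroup G} {x : G} {P : LO G}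


lemma x_mem_M : x ∈ Subgroup.closure ((H : Set G) ∪ {x}) :=
  Subgroup.subset_closure (Or.inr rfl)

lemma rmul_iff (hP : P ∈ InvLO H x)
    {b b' : G} (hb : b ∈ Subgroup.closure ((H : Set G) ∪ {x}))
    (hb' : b' ∈ Subgroup.closure ((H : Set G) ∪ {x})) :
    ltC (cone P) b b' ↔ ltC (cone P) (b * x) (b' * x) := by
  constructor
  · exact hP b hb b' hb'
  · intro h
    by_cases hbb : b = b'
    · subst hbb; exact absurd h (not_ltC_self P _)
    rcases ltC_total P hbb with h1 | h1
    · exact h1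
    · exact absurd (hP b' hb' b hb h1) (ltC_asymm P h)

lemma rmulz_iff (hP : P ∈ InvLO H x) (n : ℤ)
    {b b' : G} (hb : b ∈ Subgroup.closure ((H : Set G) ∪ {x}))
    (hb' : b' ∈ Subgroup.closure ((H : Set G) ∪ {x})) :
    ltC (cone P) b b' ↔ ltC (cone P) (b * x ^ n) (b' * x ^ n) := by
  induction n using Int.induction_on with
  | zero => simp
  | succ k ih =>
      rw [ih, show b * x ^ ((k : ℤ) + 1) = b * x ^ (k : ℤ) * x by rw [zpow_add_one]; group,
        show b' * x ^ ((k : ℤ) + 1) = b' * x ^ (k : ℤ) * x by rw [zpow_add_one]; group]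
      exact rmul_iff hP (mul_mem hb (zpow_mem x_mem_M _)) (mul_mem hb' (zpow_mem x_mem_M _))
  | pred k ih =>
      rw [ih]
      have h1 : b * x ^ (-(k : ℤ) - 1) * x = b * x ^ (-(k : ℤ)) := by
        rw [zpow_sub_one]; group
      have h2 : b' * x ^ (-(k : ℤ) - 1) * x = b' * x ^ (-(k : ℤ)) := by
        rw [zpow_sub_one]; group
      rw [← h1, ← h2]
      exact (rmul_iff hP (mul_mem hb (zpow_mem x_mem_M _))
        (mul_mem hb' (zpow_mem x_mem_M _))).symm

end Inv

section Main2

variable {G : Type*} [Group G] {x : G} {P : LO G}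

lemma ltCiff1 (P : LO G) (x g : G) (N : ℕ) :
    x ^ N * g ∈ cone P ↔ ltC (cone P) (x ^ (-(N : ℤ))) g := by
  simp [ltC, zpow_natCast]

lemma ltCiff2 (P : LO G) (x g : G) (N : ℕ) :
    g⁻¹ * x ^ N ∈ cone P ↔ ltC (cone P) g (x ^ (N : ℤ)) := by
  simp [ltC, zpow_natCast]

lemma isOpen_coneSet (g : G) : IsOpen {P : LO G | g ∈ cone P} := by
  have hc : Continuous (fun P : LO G => P.1 g) :=
    (continuous_apply g).comp continuous_subtype_val
  have : {P : LO G | g ∈ cone P} = (fun P : LO G => P.1 g) ⁻¹' {true} := by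
    ext P; simp [cone]
  rw [this]
  exact (isOpen_discrete _).preimage hc

end Main2

/-- if `H` is finitely generated, then `InvLO_x^H(G) ∩ Cof_x^H(G)` is an
open subset of `InvLO_x^H(G)` (with the subspace topology from `LO(G)`). -/
theorem isOpen_cof_inter_invLO {G : Type*} [Group G] (H : Subgroup G) (hH : H.FG) (x : G) :
    IsOpen { P : ↥(InvLO H x) | (P : LO G) ∈ Cof H x } := by
  obtain ⟨S, hS⟩ := hH
  set U : Set (LO G) :=
    {P : LO G | x ∈ cone P} ∩ ⋂ s ∈ S, ⋃ N : ℕ, ⋃ _ : 1 ≤ N,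
      ({P : LO G | x ^ N * s ∈ cone P} ∩ {P : LO G | s⁻¹ * x ^ N ∈ cone P}) with hU
  have hUopen : IsOpen U := by
    refine (isOpen_coneSet x).inter (isOpen_biInter_finset fun s _ => ?_)
    exact isOpen_iUnion fun N => isOpen_iUnion fun _ =>
      (isOpen_coneSet _).inter (isOpen_coneSet _)
  have hEq : { P : ↥(InvLO H x) | (P : LO G) ∈ Cof H x } = Subtype.val ⁻¹' U := by
    ext P
    simp only [Set.mem_setOf_eq, Set.mem_preimage, hU, Set.mem_inter_iff, Set.mem_iInter,
      Set.mem_iUnion]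
    constructor
    · intro hc
      refine ⟨?_, fun s hs => ?_⟩
      · obtain ⟨N, hN, -, h2⟩ := hc 1 H.one_mem
        have hxN : x ^ N ∈ cone (P : LO G) := by
          simpa [ltC, zpow_natCast] using h2
        exact x_mem_of_pow _ hN hxN
      · have hsH : s ∈ H := hS ▸ Subgroup.subset_closure hs
        obtain ⟨N, hN, h1, h2⟩ := hc s hsH
        exact ⟨N, hN, (ltCiff1 _ x s N).mpr h1, (ltCiff2 _ x s N).mpr h2⟩
    · rintro ⟨hx, hgen⟩
      have hP : (P : LO G) ∈ InvLO H x := P.2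
      set M := Subgroup.closure ((H : Set G) ∪ {x}) with hM
      have hxM : x ∈ M := x_mem_M
      let B : Subgroup G :=
        { carrier := {g | g ∈ M ∧ ∃ N : ℕ, 1 ≤ N ∧
            ltC (cone (P : LO G)) (x ^ (-(N : ℤ))) g ∧ ltC (cone (P : LO G)) g (x ^ (N : ℤ))}
          one_mem' := by
            refine ⟨one_mem M, 1, le_refl 1, ?_, ?_⟩
            · show (x ^ (-(1 : ℤ)))⁻¹ * 1 ∈ cone (P : LO G)
              simpa using hx
            · show (1 : G)⁻¹ * x ^ (1 : ℤ) ∈ cone (P : LO G)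
              simpa using hx
          mul_mem' := by
            rintro a b ⟨haM, N, hN, hal, hau⟩ ⟨hbM, K, hK, hbl, hbu⟩
            refine ⟨mul_mem haM hbM, N + K, le_trans hN (Nat.le_add_right _ _), ?_, ?_⟩
            · have s1 : ltC (cone (P : LO G)) (x ^ (-(N : ℤ)) * x ^ (-(K : ℤ)))
                  (a * x ^ (-(K : ℤ))) :=
                (rmulz_iff hP (-(K : ℤ)) (zpow_mem hxM _) haM).mp hal
              have s2 : ltC (cone (P : LO G)) (a * x ^ (-(K : ℤ))) (a * b) :=
                (ltC_left_iff _ a).mpr hbl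
              have e : x ^ (-(N : ℤ)) * x ^ (-(K : ℤ)) = x ^ (-((N + K : ℕ) : ℤ)) := by
                rw [← zpow_add]; push_cast; ring_nf
              rw [e] at s1
              exact ltC_trans _ s1 s2
            · have s1 : ltC (cone (P : LO G)) (a * b) (a * x ^ (K : ℤ)) :=
                (ltC_left_iff _ a).mpr hbu
              have s2 : ltC (cone (P : LO G)) (a * x ^ (K : ℤ)) (x ^ (N : ℤ) * x ^ (K : ℤ)) :=
                (rmulz_iff hP (K : ℤ) haM (zpow_mem hxM _)).mp hau
              have e : x ^ (N : ℤ) * x ^ (K : ℤ) = x ^ ((N + K : ℕ) : ℤ) := by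
                rw [← zpow_add]; push_cast; ring_nf
              rw [e] at s2
              exact ltC_trans _ s1 s2
          inv_mem' := by
            rintro a ⟨haM, N, hN, hal, hau⟩
            refine ⟨inv_mem haM, N, hN, ?_, ?_⟩
            · have h := (rmulz_iff hP (-(N : ℤ)) haM (zpow_mem hxM _)).mp hau
              have e : (a * x ^ (-(N : ℤ)))⁻¹ * (x ^ (N : ℤ) * x ^ (-(N : ℤ)))
                  = (x ^ (-(N : ℤ)))⁻¹ * a⁻¹ := by group
              show (x ^ (-(N : ℤ)))⁻¹ * a⁻¹ ∈ cone (P : LO G)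
              rw [← e]; exact h
            · have h := (rmulz_iff hP (N : ℤ) (zpow_mem hxM _) haM).mp hal
              have e : (x ^ (-(N : ℤ)) * x ^ (N : ℤ))⁻¹ * (a * x ^ (N : ℤ))
                  = (a⁻¹)⁻¹ * x ^ (N : ℤ) := by group
              show (a⁻¹)⁻¹ * x ^ (N : ℤ) ∈ cone (P : LO G)
              rw [← e]; exact h }
      have hHB : H ≤ B := by
        rw [← hS]
        refine (Subgroup.closure_le B).mpr fun s hs => ?_
        have hsH : s ∈ H := hS ▸ Subgroup.subset_closure hs
        obtain ⟨N, hN, h1, h2⟩ := hgen s hs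
        exact ⟨Subgroup.subset_closure (Or.inl hsH), N, hN,
          (ltCiff1 _ x s N).mp h1, (ltCiff2 _ x s N).mp h2⟩
      intro h hh
      obtain ⟨-, N, hN, h1, h2⟩ := hHB hh
      exact ⟨N, hN, h1, h2⟩
  rw [hEq]
  exact hUopen.preimage continuous_subtype_val
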